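/- arXiv:2107.02068 — 2 statements merged into one kernel-verified Lean document; each statement's English description precedes it below -/
import Mathlib

section
/- Let θ ∈ (0,1) be irrational and define R_θ : ℝ/ℤ → ℝ/ℤ by R_θ(u) = u + θ mod 1. For u ∈ ℝ/ℤ and k ∈ ℕ, let 𝓡(k,u) = |{0 ≤ i ≤ k : R_θ^i(u) ∈ [1−θ, 1)}|. Then there exists a constant C > 0 such that for all u ∈ ℝ/ℤ and all k ∈ ℕ, |𝓡(k,u) − θ·k| ≤ C. -/
attribute [local instance] Classical.propDecidable

/-- Number of visits of the orbit `u, u+θ, ..., u+kθ` (mod 1) to the arc `[1-θ, 1)`. -/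
noncomputable def rotationVisits (θ u : ℝ) (k : ℕ) : ℕ :=
  ((Finset.range (k + 1)).filter (fun i => Int.fract (u + i * θ) ∈ Set.Ico (1 - θ) 1)).card

lemma visit_indicator (θ x : ℝ) (hθ0 : 0 < θ) (hθ1 : θ < 1) :
    ((if Int.fract x ∈ Set.Ico (1 - θ) 1 then (1:ℤ) else 0)) = ⌊x + θ⌋ - ⌊x⌋ := by
  have hfl : Int.fract x < 1 := Int.fract_lt_one x
  have hf : Int.fract x = x - ⌊x⌋ := Int.self_sub_floor x ▸ rfl
  have hge : ⌊x⌋ ≤ ⌊x + θ⌋ := Int.floor_le_floor (by linarith)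
  have hle : ⌊x + θ⌋ < ⌊x⌋ + 2 := by
    apply Int.floor_lt.mpr
    have := Int.lt_floor_add_one x
    push_cast
    linarith
  split_ifs with h
  · obtain ⟨h1, _⟩ := h
    have : (⌊x⌋ + 1 : ℤ) ≤ ⌊x + θ⌋ := by
      apply Int.le_floor.mpr
      push_cast
      have := Int.floor_le x
      linarith
    omega
  · have h1 : Int.fract x < 1 - θ := by
      by_contra hc
      exact h ⟨by linarith, hfl⟩
    have : ⌊x + θ⌋ < ⌊x⌋ + 1 := by
      apply Int.floor_lt.mpr
      push_cast
      linarith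
    omega

theorem bounded_discrepancy (θ : ℝ) (hθ : θ ∈ Set.Ioo (0:ℝ) 1) (hirr : Irrational θ) :
    ∃ C : ℝ, 0 < C ∧ ∀ (u : ℝ) (k : ℕ),
      |(rotationVisits θ u k : ℝ) - θ * k| ≤ C := by
  obtain ⟨hθ0, hθ1⟩ := hθ
  refine ⟨3, by norm_num, fun u k => ?_⟩
  have key : (rotationVisits θ u k : ℤ) = ⌊u + ((k+1:ℕ):ℝ) * θ⌋ - ⌊u + ((0:ℕ):ℝ) * θ⌋ := by
    have h1 : rotationVisits θ u k
        = Finset.sum (Finset.range (k+1)) (fun i : ℕ => if Int.fract (u + (i:ℝ) * θ) ∈ Set.Ico (1 - θ) 1 then 1 else 0) := by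
      unfold rotationVisits
      rw [show ((Finset.range (k+1) : Finset ℕ) >>= fun a => (pure ((a:ℕ):ℝ) : Finset ℝ))
          = (Finset.range (k+1)).sup (fun a => {((a:ℕ):ℝ)}) from rfl,
        Finset.sup_singleton_apply, Finset.filter_image,
        Finset.card_image_of_injective _ (Nat.cast_injective),
        Finset.card_filter]
    calc (rotationVisits θ u k : ℤ)
        = Finset.sum (Finset.range (k+1)) (fun i : ℕ => if Int.fract (u + (i:ℝ) * θ) ∈ Set.Ico (1 - θ) 1 then (1:ℤ) else 0) := by
          rw [h1, Nat.cast_sum]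
          exact Finset.sum_congr rfl (fun i _ => by split_ifs <;> simp)
      _ = ∑ i ∈ Finset.range (k+1),
            (⌊u + ((i+1:ℕ):ℝ) * θ⌋ - ⌊u + (i:ℝ) * θ⌋) := by
          refine Finset.sum_congr rfl fun i _ => ?_
          have he : (u + ((i+1:ℕ):ℝ) * θ) = (u + (i:ℝ)*θ) + θ := by push_cast; ring
          rw [he, visit_indicator θ (u + (i:ℝ)*θ) hθ0 hθ1]
      _ = ⌊u + ((k+1:ℕ):ℝ) * θ⌋ - ⌊u + ((0:ℕ):ℝ) * θ⌋ :=
          Finset.sum_range_sub (fun i => ⌊u + (i:ℝ) * θ⌋) (k+1)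
  have key' : (rotationVisits θ u k : ℝ) = (⌊u + ((k+1:ℕ):ℝ) * θ⌋ : ℝ) - (⌊u⌋ : ℝ) := by
    have := congrArg (fun z : ℤ => (z : ℝ)) key
    push_cast at this ⊢
    simpa using this
  rw [key']
  have ha := Int.floor_le (u + ((k+1:ℕ):ℝ) * θ)
  have hb := Int.lt_floor_add_one (u + ((k+1:ℕ):ℝ) * θ)
  have hc := Int.floor_le u
  have hd := Int.lt_floor_add_one u
  rw [abs_le]
  push_cast at ha hb ⊢
  constructor <;> nlinarith
end

section
/- Let m > n ≥ 2 with θ = log n / log m, and let ν, η, ρ be shift-invariant Borel probability measures on I^ℕ (I finite) with ρ = θ·ν + (1−θ)·η and H(η,𝓓) ≤ H(ν,𝓓), where 𝓓 is the first-coordinate partition. Let a : I → ℕ with a(j) ≥ 1. Then (∑_j ν([j]) log a(j))/log m + h(ρ,σ)/log n ≤ log(∑_j a(j)^θ)/log n. -/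
open MeasureTheory

/-- The shift map on one-sided sequences. -/
def seqShift {α : Type*} (ω : ℕ → α) : ℕ → α := fun i => ω (i + 1)

/-- Shannon entropy of a measure on the full shift with respect to the partition into
cylinders of length `q`. -/
noncomputable def cylEntropy {ι : Type*} [Fintype ι] [MeasurableSpace ι]
    (μ : Measure (ℕ → ι)) (q : ℕ) : ℝ :=
  ∑ w : Fin q → ι, Real.negMulLog ((μ {x | ∀ i : Fin q, x (i : ℕ) = w i}).toReal)

/-- Kolmogorov–Sinai entropy of a shift-invariant measure on the full shift, computed
via the generating partition into first-coordinate cylinders: `h = inf_q H_q / q`. -/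
noncomputable def shiftEntropy {ι : Type*} [Fintype ι] [MeasurableSpace ι]
    (μ : Measure (ℕ → ι)) : ℝ :=
  ⨅ q : ℕ, cylEntropy μ (q + 1) / (q + 1)

/-! ### Auxiliary real-analysis lemmas -/

lemma aux_negMulLog_add_le {x y : ℝ} (hx : 0 ≤ x) (hy : 0 ≤ y) :
    Real.negMulLog (x + y) ≤ Real.negMulLog x + Real.negMulLog y := by
  rcases eq_or_lt_of_le hx with h | hx'
  · simp [← h]
  rcases eq_or_lt_of_le hy with h | hy'
  · simp [← h]
  simp only [Real.negMulLog, neg_mul]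
  have h1 : x * Real.log x ≤ x * Real.log (x + y) :=
    mul_le_mul_of_nonneg_left (Real.log_le_log hx' (by linarith)) hx
  have h2 : y * Real.log y ≤ y * Real.log (x + y) :=
    mul_le_mul_of_nonneg_left (Real.log_le_log hy' (by linarith)) hy
  nlinarith [add_mul x y (Real.log (x + y))]

/-- Gibbs' inequality. -/
lemma aux_gibbs {κ : Type*} [Fintype κ] (p q : κ → ℝ)
    (hp : ∀ i, 0 ≤ p i) (hpq : ∀ i, q i = 0 → p i = 0) (hq : ∀ i, 0 ≤ q i)
    (hps : ∑ i, p i = 1) (hqs : ∑ i, q i ≤ 1) :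
    ∑ i, Real.negMulLog (p i) ≤ ∑ i, p i * (- Real.log (q i)) := by
  have key : ∀ i, Real.negMulLog (p i) - p i * (- Real.log (q i)) ≤ q i - p i := by
    intro i
    rcases eq_or_lt_of_le (hp i) with h | hpi
    · rw [← h]; simpa using hq i
    have hqi : 0 < q i := lt_of_le_of_ne (hq i) fun h => by
      have := hpq i h.symm; linarith
    have hlog : Real.log (q i) - Real.log (p i) ≤ q i / p i - 1 := by
      have := Real.log_le_sub_one_of_pos (div_pos hqi hpi)
      rwa [Real.log_div (ne_of_gt hqi) (ne_of_gt hpi)] at this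
    have hmul := mul_le_mul_of_nonneg_left hlog (hp i)
    have hcanc : p i * (q i / p i - 1) = q i - p i := by field_simp
    simp only [Real.negMulLog, neg_mul]
    nlinarith [hmul, hcanc]
  have hsum : ∑ i, (Real.negMulLog (p i) - p i * (- Real.log (q i)))
      ≤ ∑ i, (q i - p i) := Finset.sum_le_sum fun i _ => key i
  rw [Finset.sum_sub_distrib, Finset.sum_sub_distrib, hps] at hsum
  linarith

/-- Subadditivity of Shannon entropy for a joint distribution. -/
lemma aux_entropy_pair_le {α β : Type*} [Fintype α] [Fintype β] (p : α → β → ℝ)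
    (hp : ∀ a b, 0 ≤ p a b) (hs : ∑ a, ∑ b, p a b = 1) :
    ∑ a, ∑ b, Real.negMulLog (p a b) ≤
      ∑ a, Real.negMulLog (∑ b, p a b) + ∑ b, Real.negMulLog (∑ a, p a b) := by
  set P : α → ℝ := fun a => ∑ b, p a b with hP
  set Q : β → ℝ := fun b => ∑ a, p a b with hQ
  have hPn : ∀ a, 0 ≤ P a := fun a => Finset.sum_nonneg fun b _ => hp a b
  have hQn : ∀ b, 0 ≤ Q b := fun b => Finset.sum_nonneg fun a _ => hp a b
  have hPs : ∑ a, P a = 1 := hs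
  have hQs : ∑ b, Q b = 1 := by
    rw [hQ]; rw [Finset.sum_comm]; exact hs
  have hple : ∀ a b, p a b ≤ P a := fun a b =>
    Finset.single_le_sum (fun b _ => hp a b) (Finset.mem_univ b)
  have hqle : ∀ a b, p a b ≤ Q b := fun a b =>
    Finset.single_le_sum (fun a _ => hp a b) (Finset.mem_univ a)
  have hpsum : ∑ z : α × β, p z.1 z.2 = 1 := by
    rw [show (∑ z : α × β, p z.1 z.2) = ∑ a, ∑ b, p a b from
      Fintype.sum_prod_type (fun z : α × β => p z.1 z.2)]
    exact hs
  have hqsum : ∑ z : α × β, P z.1 * Q z.2 = 1 := by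
    rw [show (∑ z : α × β, P z.1 * Q z.2) = ∑ a, ∑ b, P a * Q b from
      Fintype.sum_prod_type (fun z : α × β => P z.1 * Q z.2),
      ← Fintype.sum_mul_sum, hPs, hQs, one_mul]
  have key := aux_gibbs (κ := α × β) (fun z => p z.1 z.2) (fun z => P z.1 * Q z.2)
    (fun z => hp z.1 z.2)
    (fun z hz => by
      rcases mul_eq_zero.mp hz with h | h
      · exact le_antisymm (h ▸ hple z.1 z.2) (hp z.1 z.2)
      · exact le_antisymm (h ▸ hqle z.1 z.2) (hp z.1 z.2))
    (fun z => mul_nonneg (hPn z.1) (hQn z.2))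
    hpsum (le_of_eq hqsum)
  have key2 : ∑ a, ∑ b, Real.negMulLog (p a b)
      ≤ ∑ a, ∑ b, p a b * (- Real.log (P a * Q b)) := by
    calc ∑ a, ∑ b, Real.negMulLog (p a b)
        = ∑ z : α × β, Real.negMulLog (p z.1 z.2) :=
          (Fintype.sum_prod_type (fun z : α × β => Real.negMulLog (p z.1 z.2))).symm
      _ ≤ ∑ z : α × β, p z.1 z.2 * (- Real.log (P z.1 * Q z.2)) := key
      _ = ∑ a, ∑ b, p a b * (- Real.log (P a * Q b)) :=
          Fintype.sum_prod_type (fun z : α × β => p z.1 z.2 * (- Real.log (P z.1 * Q z.2)))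
  calc ∑ a, ∑ b, Real.negMulLog (p a b)
      ≤ ∑ a, ∑ b, p a b * (- Real.log (P a * Q b)) := key2
    _ = ∑ a, ∑ b, (p a b * (- Real.log (P a)) + p a b * (- Real.log (Q b))) := by
        refine Finset.sum_congr rfl fun a _ => Finset.sum_congr rfl fun b _ => ?_
        rcases eq_or_lt_of_le (hp a b) with h | hpos
        · simp [← h]
        have hPa : 0 < P a := lt_of_lt_of_le hpos (hple a b)
        have hQb : 0 < Q b := lt_of_lt_of_le hpos (hqle a b)
        rw [Real.log_mul (ne_of_gt hPa) (ne_of_gt hQb)]; ring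
    _ = ∑ a, Real.negMulLog (P a) + ∑ b, Real.negMulLog (Q b) := by
        simp only [Finset.sum_add_distrib]
        congr 1
        · refine Finset.sum_congr rfl fun a _ => ?_
          rw [← Finset.sum_mul]
          show P a * (- Real.log (P a)) = Real.negMulLog (P a)
          unfold Real.negMulLog; ring
        · rw [Finset.sum_comm]
          refine Finset.sum_congr rfl fun b _ => ?_
          rw [← Finset.sum_mul]
          show Q b * (- Real.log (Q b)) = Real.negMulLog (Q b)
          unfold Real.negMulLog; ring

/-! ### Measure-theoretic auxiliary lemmas -/

section Measures

variable {ι : Type*} [Fintype ι] [MeasurableSpace ι] [DiscreteMeasurableSpace ι]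

lemma aux_measurable_seqShift : Measurable (seqShift (α := ι)) :=
  measurable_pi_lambda _ fun i => measurable_pi_apply (i + 1)

/-- Cylinder sets of length `q`. -/
def aux_cyl (q : ℕ) (w : Fin q → ι) : Set (ℕ → ι) := {x | ∀ i : Fin q, x (i : ℕ) = w i}

lemma aux_cyl_measurable (q : ℕ) (w : Fin q → ι) : MeasurableSet (aux_cyl q w) := by
  have : aux_cyl q w = ⋂ i : Fin q, (fun x : ℕ → ι => x (i : ℕ)) ⁻¹' {w i} := by
    ext x; simp [aux_cyl]
  rw [this]
  exact MeasurableSet.iInter fun i =>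
    (measurable_pi_apply _) (MeasurableSet.singleton _)

lemma aux_cyl_disjoint (q : ℕ) : Pairwise (Function.onFun Disjoint (aux_cyl (ι := ι) q)) := by
  intro w w' hww'
  rw [Function.onFun, Set.disjoint_left]
  intro x hx hx'
  exact hww' (funext fun i => (hx i).symm.trans (hx' i))

lemma aux_cyl_cover (q : ℕ) : ⋃ w, aux_cyl (ι := ι) q w = Set.univ := by
  ext x
  simp only [Set.mem_iUnion, Set.mem_univ, iff_true]
  exact ⟨fun i => x (i : ℕ), fun i => rfl⟩

/-- Summing a finite measure over the pieces of a finite measurable partition. -/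
lemma aux_sum_partition {κ : Type*} [Fintype κ] (μ : Measure (ℕ → ι)) [IsFiniteMeasure μ]
    (S : κ → Set (ℕ → ι)) (hm : ∀ k, MeasurableSet (S k))
    (hd : Pairwise (Function.onFun Disjoint S)) (hu : ⋃ k, S k = Set.univ)
    (B : Set (ℕ → ι)) (hB : MeasurableSet B) :
    ∑ k, (μ (S k ∩ B)).toReal = (μ B).toReal := by
  have h1 : B = ⋃ k, S k ∩ B := by
    rw [← Set.iUnion_inter, hu, Set.univ_inter]
  have h2 : μ B = ∑' k, μ (S k ∩ B) := by
    conv_lhs => rw [h1]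
    exact measure_iUnion (fun i j hij => (hd hij).mono Set.inter_subset_left
      Set.inter_subset_left) (fun k => (hm k).inter hB)
  rw [h2, tsum_fintype, ENNReal.toReal_sum (fun k _ => measure_ne_top μ _)]

lemma aux_shift_inv {μ : Measure (ℕ → ι)} (hinv : Measure.map seqShift μ = μ)
    {A : Set (ℕ → ι)} (hA : MeasurableSet A) : μ (seqShift ⁻¹' A) = μ A := by
  conv_rhs => rw [← hinv]
  rw [Measure.map_apply aux_measurable_seqShift hA]

/-- First-coordinate sets. -/
def aux_S (j : ι) : Set (ℕ → ι) := {x : ℕ → ι | x 0 = j}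

lemma aux_S_measurable (j : ι) : MeasurableSet (aux_S (ι := ι) j) := by
  have h : aux_S (ι := ι) j = (fun x : ℕ → ι => x 0) ⁻¹' {j} := rfl
  rw [h]
  exact (measurable_pi_apply 0) (MeasurableSet.singleton j)

lemma aux_S_disjoint : Pairwise (Function.onFun Disjoint (aux_S (ι := ι))) := by
  intro j j' hjj'
  rw [Function.onFun, Set.disjoint_left]
  intro x hx hx'
  exact hjj' (hx.symm.trans hx')

lemma aux_S_cover : ⋃ j, aux_S (ι := ι) j = Set.univ := by
  ext x; simp only [Set.mem_iUnion, Set.mem_univ, iff_true]; exact ⟨x 0, rfl⟩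

variable (μ : Measure (ℕ → ι)) [IsProbabilityMeasure μ]

lemma aux_sum_cyl (q : ℕ) : ∑ w : Fin q → ι, (μ (aux_cyl q w)).toReal = 1 := by
  have := aux_sum_partition μ (aux_cyl q) (aux_cyl_measurable q) (aux_cyl_disjoint q)
    (aux_cyl_cover q) Set.univ MeasurableSet.univ
  simpa using this

lemma aux_cylEntropy_eq (q : ℕ) :
    cylEntropy μ q = ∑ w : Fin q → ι, Real.negMulLog ((μ (aux_cyl q w)).toReal) := rfl

lemma aux_cylEntropy_one :
    cylEntropy μ 1 = ∑ j : ι, Real.negMulLog ((μ (aux_S j)).toReal) := by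
  have hset : ∀ w : Fin 1 → ι, aux_cyl 1 w = aux_S (w 0) := by
    intro w; ext x
    simp only [aux_cyl, aux_S, Set.mem_setOf_eq]
    constructor
    · intro h; exact h 0
    · intro h i; rw [Subsingleton.elim i 0]; exact h
  rw [aux_cylEntropy_eq,
    show (∑ w : Fin 1 → ι, Real.negMulLog ((μ (aux_cyl 1 w)).toReal))
      = ∑ w : Fin 1 → ι, Real.negMulLog ((μ (aux_S (w 0))).toReal) from
    Finset.sum_congr rfl fun w _ => by rw [hset w]]
  exact Fintype.sum_equiv (Equiv.funUnique (Fin 1) ι) _ _ (fun w => rfl)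

lemma aux_cylEntropy_nonneg (q : ℕ) : 0 ≤ cylEntropy μ q := by
  refine Finset.sum_nonneg fun w _ => Real.negMulLog_nonneg ENNReal.toReal_nonneg ?_
  calc (μ _).toReal ≤ ((1 : ENNReal)).toReal := ENNReal.toReal_mono ENNReal.one_ne_top prob_le_one
    _ = 1 := rfl

/-- One step of subadditivity for the cylinder entropies of a shift-invariant measure. -/
lemma aux_cylEntropy_succ_le (hinv : Measure.map seqShift μ = μ) (q : ℕ) :
    cylEntropy μ (q + 1) ≤ cylEntropy μ 1 + cylEntropy μ q := by
  classical
  set T : (Fin q → ι) → Set (ℕ → ι) := fun w => seqShift ⁻¹' aux_cyl q w with hT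
  have hTm : ∀ w, MeasurableSet (T w) := fun w =>
    aux_measurable_seqShift (aux_cyl_measurable q w)
  set p : ι → (Fin q → ι) → ℝ := fun j w => (μ (aux_S j ∩ T w)).toReal with hp
  -- the cylinder of `Fin.cons j w` is `aux_S j ∩ T w`
  have hcyl : ∀ (j : ι) (w : Fin q → ι),
      aux_cyl (q + 1) (Fin.cons j w) = aux_S j ∩ T w := by
    intro j w
    ext x
    simp only [aux_cyl, aux_S, hT, Set.mem_setOf_eq, Set.mem_inter_iff, Set.mem_preimage]
    constructor
    · intro h
      refine ⟨h 0, fun i => ?_⟩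
      have := h i.succ
      simpa [Fin.cons_succ, seqShift] using this
    · rintro ⟨h0, hs⟩ i
      refine Fin.cases ?_ (fun k => ?_) i
      · simpa using h0
      · have := hs k
        simpa [Fin.cons_succ, seqShift] using this
  -- rewrite the length-(q+1) entropy as a double sum
  have hre : cylEntropy μ (q + 1) = ∑ j : ι, ∑ w : Fin q → ι, Real.negMulLog (p j w) := by
    calc cylEntropy μ (q + 1)
        = ∑ z : ι × (Fin q → ι),
            Real.negMulLog ((μ (aux_cyl (q + 1) (Fin.cons z.1 z.2))).toReal) :=
          (Fintype.sum_equiv (Fin.consEquiv fun _ : Fin (q + 1) => ι) _ _ fun z => rfl).symm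
      _ = ∑ j : ι, ∑ w : Fin q → ι, Real.negMulLog (p j w) := by
          rw [show (∑ z : ι × (Fin q → ι),
              Real.negMulLog ((μ (aux_cyl (q + 1) (Fin.cons z.1 z.2))).toReal))
            = ∑ j : ι, ∑ w : Fin q → ι,
              Real.negMulLog ((μ (aux_cyl (q + 1) (Fin.cons j w))).toReal)
            from Fintype.sum_prod_type
              (fun z : ι × (Fin q → ι) =>
                Real.negMulLog ((μ (aux_cyl (q + 1) (Fin.cons z.1 z.2))).toReal))]
          refine Finset.sum_congr rfl fun j _ => Finset.sum_congr rfl fun w _ => ?_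
          rw [hcyl j w]
  have hTd : Pairwise (Function.onFun Disjoint T) := fun w w' h =>
    (aux_cyl_disjoint q h).preimage seqShift
  have hTc : ⋃ w, T w = Set.univ := by
    rw [hT, ← Set.preimage_iUnion, aux_cyl_cover]; rfl
  have hpn : ∀ j w, 0 ≤ p j w := fun j w => ENNReal.toReal_nonneg
  -- marginals
  have hmargS : ∀ j, ∑ w, p j w = (μ (aux_S j)).toReal := by
    intro j
    calc ∑ w, p j w = ∑ w, (μ (T w ∩ aux_S j)).toReal :=
          Finset.sum_congr rfl fun w _ => by
            show (μ (aux_S j ∩ T w)).toReal = _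
            rw [Set.inter_comm]
      _ = (μ (aux_S j)).toReal :=
          aux_sum_partition μ T hTm hTd hTc (aux_S j) (aux_S_measurable j)
  have hmargT : ∀ w, ∑ j, p j w = (μ (aux_cyl q w)).toReal := by
    intro w
    calc ∑ j, p j w = (μ (T w)).toReal :=
          aux_sum_partition μ aux_S aux_S_measurable aux_S_disjoint aux_S_cover
            (T w) (hTm w)
      _ = (μ (aux_cyl q w)).toReal := by
          rw [hT]
          exact congrArg ENNReal.toReal (aux_shift_inv hinv (aux_cyl_measurable q w))
  have hsum : ∑ j : ι, ∑ w : Fin q → ι, p j w = 1 := by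
    rw [Finset.sum_congr rfl fun j _ => hmargS j]
    have := aux_sum_partition μ aux_S aux_S_measurable aux_S_disjoint aux_S_cover
      Set.univ MeasurableSet.univ
    simpa using this
  have key := aux_entropy_pair_le p hpn hsum
  rw [hre]
  calc ∑ j : ι, ∑ w : Fin q → ι, Real.negMulLog (p j w)
      ≤ ∑ j, Real.negMulLog (∑ w, p j w) + ∑ w, Real.negMulLog (∑ j, p j w) := key
    _ = cylEntropy μ 1 + cylEntropy μ q := by
        rw [aux_cylEntropy_one, aux_cylEntropy_eq]
        congr 1
        · exact Finset.sum_congr rfl fun j _ => by rw [hmargS j]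
        · exact Finset.sum_congr rfl fun w _ => by rw [hmargT w]

lemma aux_cylEntropy_le (hinv : Measure.map seqShift μ = μ) (q : ℕ) :
    cylEntropy μ q ≤ q * cylEntropy μ 1 := by
  induction q with
  | zero => simp [cylEntropy]
  | succ k ih =>
    calc cylEntropy μ (k + 1) ≤ cylEntropy μ 1 + cylEntropy μ k :=
          aux_cylEntropy_succ_le μ hinv k
      _ ≤ cylEntropy μ 1 + k * cylEntropy μ 1 := by linarith
      _ = (k + 1 : ℕ) * cylEntropy μ 1 := by push_cast; ring

end Measures

theorem hausdorff_entropy_bound {ι : Type*} [Fintype ι] [MeasurableSpace ι]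
    [DiscreteMeasurableSpace ι] [Nonempty ι]
    (m n : ℕ) (hnm : n < m) (hn : 2 ≤ n) (θ : ℝ) (hθ : θ = Real.log n / Real.log m)
    (ν η ρ : Measure (ℕ → ι))
    [IsProbabilityMeasure ν] [IsProbabilityMeasure η] [IsProbabilityMeasure ρ]
    (hνinv : Measure.map seqShift ν = ν)
    (hηinv : Measure.map seqShift η = η)
    (hρinv : Measure.map seqShift ρ = ρ)
    (hcomb : ρ = ENNReal.ofReal θ • ν + ENNReal.ofReal (1 - θ) • η)
    (hH : ∑ j, Real.negMulLog ((η {x | x 0 = j}).toReal)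
      ≤ ∑ j, Real.negMulLog ((ν {x | x 0 = j}).toReal))
    (a : ι → ℕ) (ha : ∀ j, 1 ≤ a j) :
    (∑ j, (ν {x | x 0 = j}).toReal * Real.log (a j)) / Real.log m
        + shiftEntropy ρ / Real.log n
      ≤ Real.log (∑ j, (a j : ℝ) ^ θ) / Real.log n := by
  classical
  have hn1 : (1 : ℝ) < n := by exact_mod_cast lt_of_lt_of_le one_lt_two hn
  have hm1 : (1 : ℝ) < m := lt_trans hn1 (by exact_mod_cast hnm)
  have hlogn : 0 < Real.log n := Real.log_pos hn1
  have hlogm : 0 < Real.log m := Real.log_pos hm1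
  have hlognm : Real.log n < Real.log m :=
    Real.log_lt_log (by positivity) (by exact_mod_cast hnm)
  have hθ0 : 0 < θ := hθ ▸ div_pos hlogn hlogm
  have hθ1 : θ < 1 := hθ ▸ (div_lt_one hlogm).mpr hlognm
  have h1θ : (0:ℝ) ≤ 1 - θ := by linarith
  -- notation
  set H1ν : ℝ := ∑ j, Real.negMulLog ((ν {x | x 0 = j}).toReal) with hH1ν
  set H1η : ℝ := ∑ j, Real.negMulLog ((η {x | x 0 = j}).toReal) with hH1η
  -- mixture decomposition on every set
  have hmix : ∀ (A : Set (ℕ → ι)), (ρ A).toReal = θ * (ν A).toReal + (1 - θ) * (η A).toReal := by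
    intro A
    rw [hcomb]
    simp only [Measure.coe_add, Measure.coe_smul, Pi.add_apply, Pi.smul_apply,
      smul_eq_mul]
    rw [ENNReal.toReal_add
        (ENNReal.mul_ne_top ENNReal.ofReal_ne_top (measure_ne_top ν A))
        (ENNReal.mul_ne_top ENNReal.ofReal_ne_top (measure_ne_top η A))]
    rw [ENNReal.toReal_mul, ENNReal.toReal_mul,
      ENNReal.toReal_ofReal hθ0.le, ENNReal.toReal_ofReal h1θ]
  -- step 1: cylinder entropies of ρ are bounded by a mixture plus a constant
  set C : ℝ := Real.negMulLog θ + Real.negMulLog (1 - θ) with hC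
  have hstep1 : ∀ q : ℕ, cylEntropy ρ q ≤ θ * cylEntropy ν q + (1 - θ) * cylEntropy η q + C := by
    intro q
    rw [aux_cylEntropy_eq, aux_cylEntropy_eq, aux_cylEntropy_eq]
    have termwise : ∀ w : Fin q → ι,
        Real.negMulLog ((ρ (aux_cyl q w)).toReal) ≤
          θ * Real.negMulLog ((ν (aux_cyl q w)).toReal)
          + (ν (aux_cyl q w)).toReal * Real.negMulLog θ
          + (1 - θ) * Real.negMulLog ((η (aux_cyl q w)).toReal)
          + (η (aux_cyl q w)).toReal * Real.negMulLog (1 - θ) := by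
      intro w
      rw [hmix (aux_cyl q w)]
      calc Real.negMulLog (θ * (ν (aux_cyl q w)).toReal + (1 - θ) * (η (aux_cyl q w)).toReal)
          ≤ Real.negMulLog (θ * (ν (aux_cyl q w)).toReal)
            + Real.negMulLog ((1 - θ) * (η (aux_cyl q w)).toReal) :=
            aux_negMulLog_add_le (mul_nonneg hθ0.le ENNReal.toReal_nonneg)
              (mul_nonneg h1θ ENNReal.toReal_nonneg)
        _ = _ := by
            rw [Real.negMulLog_mul, Real.negMulLog_mul]; ring
    calc ∑ w : Fin q → ι, Real.negMulLog ((ρ (aux_cyl q w)).toReal)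
        ≤ ∑ w : Fin q → ι,
          (θ * Real.negMulLog ((ν (aux_cyl q w)).toReal)
          + (ν (aux_cyl q w)).toReal * Real.negMulLog θ
          + (1 - θ) * Real.negMulLog ((η (aux_cyl q w)).toReal)
          + (η (aux_cyl q w)).toReal * Real.negMulLog (1 - θ)) :=
          Finset.sum_le_sum fun w _ => termwise w
      _ = θ * (∑ w : Fin q → ι, Real.negMulLog ((ν (aux_cyl q w)).toReal))
          + (1 - θ) * (∑ w : Fin q → ι, Real.negMulLog ((η (aux_cyl q w)).toReal)) + C := by
          simp only [Finset.sum_add_distrib, ← Finset.mul_sum, ← Finset.sum_mul,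
            aux_sum_cyl, hC]
          ring
  -- step 2: shiftEntropy ρ ≤ θ H1ν + (1-θ) H1η
  have hH1νeq : cylEntropy ν 1 = H1ν := by rw [aux_cylEntropy_one]; rfl
  have hH1ηeq : cylEntropy η 1 = H1η := by rw [aux_cylEntropy_one]; rfl
  set L : ℝ := θ * H1ν + (1 - θ) * H1η with hL
  have hstep2 : shiftEntropy ρ ≤ L := by
    have hbdd : BddBelow (Set.range fun q : ℕ => cylEntropy ρ (q + 1) / (q + 1)) := by
      refine ⟨0, ?_⟩
      rintro x ⟨q, rfl⟩
      have hq1 : (0:ℝ) < (q:ℝ) + 1 := by positivity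
      exact div_nonneg (aux_cylEntropy_nonneg ρ (q + 1)) hq1.le
    have hq : ∀ q : ℕ, shiftEntropy ρ ≤ L + C / ((q : ℝ) + 1) := by
      intro q
      have h1 : shiftEntropy ρ ≤ cylEntropy ρ (q + 1) / ((q : ℝ) + 1) := ciInf_le hbdd q
      have hq1 : (0:ℝ) < (q:ℝ) + 1 := by positivity
      have h2 : cylEntropy ρ (q + 1) ≤ ((q : ℝ) + 1) * L + C := by
        have hmain := hstep1 (q + 1)
        have hν := aux_cylEntropy_le ν hνinv (q + 1)
        have hη := aux_cylEntropy_le η hηinv (q + 1)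
        rw [hH1νeq] at hν
        rw [hH1ηeq] at hη
        push_cast at hν hη
        calc cylEntropy ρ (q + 1)
            ≤ θ * cylEntropy ν (q+1) + (1 - θ) * cylEntropy η (q+1) + C := hmain
          _ ≤ θ * (((q:ℝ) + 1) * H1ν) + (1 - θ) * (((q:ℝ) + 1) * H1η) + C := by
              nlinarith [mul_le_mul_of_nonneg_left hν hθ0.le,
                mul_le_mul_of_nonneg_left hη h1θ]
          _ = ((q : ℝ) + 1) * L + C := by rw [hL]; ring
      calc shiftEntropy ρ ≤ cylEntropy ρ (q + 1) / ((q : ℝ) + 1) := h1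
        _ ≤ (((q : ℝ) + 1) * L + C) / ((q : ℝ) + 1) := by gcongr
        _ = L + C / ((q : ℝ) + 1) := by field_simp
    have htend : Filter.Tendsto (fun q : ℕ => L + C / ((q : ℝ) + 1)) Filter.atTop
        (nhds L) := by
      have h0 : Filter.Tendsto (fun q : ℕ => C / ((q : ℝ) + 1)) Filter.atTop (nhds 0) := by
        have h := tendsto_one_div_add_atTop_nhds_zero_nat.const_mul C
        simp only [mul_one_div] at h
        simpa using h
      have := Filter.Tendsto.add (tendsto_const_nhds (x := L)) h0
      simpa using this
    exact ge_of_tendsto htend (Filter.Eventually.of_forall hq)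
  -- step 3: L ≤ H1ν using hH
  have hstep3 : L ≤ H1ν := by
    rw [hL]
    nlinarith [mul_le_mul_of_nonneg_left hH h1θ]
  -- step 4: Gibbs' inequality for ν with weights a j ^ θ / S
  set S : ℝ := ∑ j, (a j : ℝ) ^ θ with hS
  have haj : ∀ j, (0:ℝ) < (a j : ℝ) ^ θ := fun j =>
    Real.rpow_pos_of_pos (by exact_mod_cast ha j) θ
  have hSpos : 0 < S := Finset.sum_pos (fun j _ => haj j) Finset.univ_nonempty
  set A : ℝ := ∑ j, (ν {x | x 0 = j}).toReal * Real.log (a j) with hA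
  have hsumcylν : ∑ j : ι, (ν {x | x 0 = j}).toReal = 1 := by
    have := aux_sum_partition ν aux_S aux_S_measurable aux_S_disjoint aux_S_cover
      Set.univ MeasurableSet.univ
    simpa [aux_S] using this
  have hstep4 : H1ν ≤ -θ * A + Real.log S := by
    have hgibbs := aux_gibbs (fun j => (ν {x | x 0 = j}).toReal)
      (fun j => (a j : ℝ) ^ θ / S)
      (fun j => ENNReal.toReal_nonneg)
      (fun j h => absurd h (ne_of_gt (div_pos (haj j) hSpos)))
      (fun j => (div_pos (haj j) hSpos).le)
      hsumcylν
      (by rw [← Finset.sum_div, ← hS, div_self (ne_of_gt hSpos)])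
    rw [hH1ν]
    refine hgibbs.trans_eq ?_
    have hterm : ∀ j : ι, (ν {x | x 0 = j}).toReal * (- Real.log ((a j : ℝ) ^ θ / S))
        = -θ * ((ν {x | x 0 = j}).toReal * Real.log (a j))
          + (ν {x | x 0 = j}).toReal * Real.log S := by
      intro j
      rw [Real.log_div (ne_of_gt (haj j)) (ne_of_gt hSpos),
        Real.log_rpow (by exact_mod_cast ha j)]
      ring
    rw [Finset.sum_congr rfl fun j _ => hterm j, Finset.sum_add_distrib,
      ← Finset.sum_mul, hsumcylν, ← Finset.mul_sum, ← hA]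
    ring
  -- conclusion
  have hrel : θ / Real.log n = 1 / Real.log m := by
    rw [hθ]; field_simp
  have hfinal : shiftEntropy ρ ≤ -θ * A + Real.log S :=
    hstep2.trans (hstep3.trans hstep4)
  have h1 : A / Real.log m + shiftEntropy ρ / Real.log n
      ≤ A / Real.log m + (-θ * A + Real.log S) / Real.log n := by
    gcongr
  refine h1.trans_eq ?_
  rw [add_div, neg_mul, neg_div, mul_comm, mul_div_assoc, hrel]
  ring
end
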